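/- Let (K, ρ) be a compact metric space, α ∈ (0,1), f ∈ Lip_α(K,ρ), A a finite subset of K, and C > 1. Then there exists g ∈ Lip(K,ρ) (hence g ∈ lip_α(K,ρ)) such that g = f on A and ‖g‖_α ≤ C‖f‖_α. -/

import Mathlib

open Metric

variable {K : Type*} [MetricSpace K]

/-- The Hölder norm `‖f‖_α = max{[f]_α, ‖f‖_∞}` on `Lip_α(K,ρ)`. -/
noncomputable def holderNorm (α : ℝ) (f : K → ℝ) : ℝ :=
  max (sSup {r : ℝ | ∃ x y : K, x ≠ y ∧ r = |f x - f y| / dist x y ^ α})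
    (sSup (Set.range fun x : K => |f x|))

private lemma aux_concave_shift {α ε : ℝ} (h0 : 0 ≤ α) (h1 : α ≤ 1) (hε : 0 ≤ ε) :
    ConcaveOn ℝ (Set.Ici 0) (fun t : ℝ => (t + ε) ^ α) := by
  refine ⟨convex_Ici 0, fun x hx y hy a b ha hb hab => ?_⟩
  have hx' : (0:ℝ) ≤ x := hx
  have hy' : (0:ℝ) ≤ y := hy
  have h := (Real.concaveOn_rpow h0 h1).2 (Set.mem_Ici.2 (by linarith : (0:ℝ) ≤ x + ε))
      (Set.mem_Ici.2 (by linarith : (0:ℝ) ≤ y + ε)) ha hb hab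
  simp only [smul_eq_mul] at h ⊢
  have hkey : a * (x + ε) + b * (y + ε) = a * x + b * y + ε := by
    have : a * (x + ε) + b * (y + ε) = a * x + b * y + (a + b) * ε := by ring
    rw [this, hab, one_mul]
  rwa [hkey] at h

private lemma aux_subadd {ψ : ℝ → ℝ} (hconc : ConcaveOn ℝ (Set.Ici 0) ψ) (hψ0 : ψ 0 = 0)
    {u v : ℝ} (hu : 0 ≤ u) (hv : 0 ≤ v) : ψ (u + v) ≤ ψ u + ψ v := by
  rcases eq_or_lt_of_le (add_nonneg hu hv) with h | hs
  · have hu0 : u = 0 := by linarith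
    have hv0 : v = 0 := by linarith
    simp [hu0, hv0, hψ0]
  · have hsne : u + v ≠ 0 := ne_of_gt hs
    have h₁ := hconc.2 (Set.mem_Ici.2 hs.le) (Set.mem_Ici.2 (le_refl (0:ℝ)))
      (div_nonneg hu hs.le) (div_nonneg hv hs.le) (by field_simp)
    have h₂ := hconc.2 (Set.mem_Ici.2 hs.le) (Set.mem_Ici.2 (le_refl (0:ℝ)))
      (div_nonneg hv hs.le) (div_nonneg hu hs.le) (by field_simp; ring)
    simp only [smul_eq_mul, smul_zero, mul_zero, add_zero, hψ0] at h₁ h₂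
    rw [div_mul_cancel₀ _ hsne] at h₁ h₂
    have hsum : u / (u + v) * ψ (u + v) + v / (u + v) * ψ (u + v) = ψ (u + v) := by
      field_simp
    linarith

/-- Let `(K,ρ)` be a compact metric space, `α ∈ (0,1)`, `f ∈ Lip_α(K,ρ)`, `A ⊆ K`
finite and `C > 1`. Then there is a Lipschitz function `g ∈ Lip(K,ρ)` (hence
`g ∈ lip_α(K,ρ)`) with `g = f` on `A` and `‖g‖_α ≤ C ‖f‖_α`. -/
theorem holder_finite_interpolation [CompactSpace K] (α : ℝ) (h0 : 0 < α) (h1 : α < 1)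
    (f : K → ℝ) (M : ℝ) (hf : ∀ x y : K, |f x - f y| ≤ M * dist x y ^ α)
    (A : Finset K) (C : ℝ) (hC : 1 < C) :
    ∃ g : K → ℝ, (∃ L : ℝ, ∀ x y : K, |g x - g y| ≤ L * dist x y) ∧
      (∀ a ∈ A, g a = f a) ∧ holderNorm α g ≤ C * holderNorm α f := by
  classical
  set Q : Set ℝ := {r : ℝ | ∃ x y : K, x ≠ y ∧ r = |f x - f y| / dist x y ^ α} with hQdef
  set S : ℝ := sSup (Set.range fun x : K => |f x|) with hSdef
  set N : ℝ := holderNorm α f with hNdef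
  have hS0 : 0 ≤ S := Real.sSup_nonneg (by rintro r ⟨x, rfl⟩; positivity)
  have hSN : S ≤ N := le_max_right _ _
  have hN0 : 0 ≤ N := hS0.trans hSN
  have hCN0 : 0 ≤ C * N := mul_nonneg (by linarith) hN0
  have hNC : N ≤ C * N := by nlinarith
  -- quotient bound by N
  have hfN : ∀ x y : K, |f x - f y| ≤ N * dist x y ^ α := by
    intro x y
    by_cases hxy : x = y
    · simp [hxy, Real.zero_rpow (ne_of_gt h0)]
    · have hd : (0:ℝ) < dist x y := dist_pos.2 hxy
      have hdα : (0:ℝ) < dist x y ^ α := Real.rpow_pos_of_pos hd α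
      have hQbdd : BddAbove Q := by
        refine ⟨max M 0, ?_⟩
        rintro r ⟨x', y', hxy', rfl⟩
        by_cases hM : (0:ℝ) < dist x' y' ^ α
        · exact le_max_of_le_left ((div_le_iff₀ hM).2 (by simpa [mul_comm] using hf x' y'))
        · have : dist x' y' ^ α = 0 := le_antisymm (not_lt.1 hM)
            (Real.rpow_nonneg dist_nonneg α)
          simp [this]
        
      have hmem : |f x - f y| / dist x y ^ α ∈ Q := ⟨x, y, hxy, rfl⟩
      have h1' : |f x - f y| / dist x y ^ α ≤ sSup Q := le_csSup hQbdd hmem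
      have h2' : sSup Q ≤ N := le_max_left _ _
      calc |f x - f y| = (|f x - f y| / dist x y ^ α) * dist x y ^ α := by
            field_simp
        _ ≤ N * dist x y ^ α := by
            apply mul_le_mul_of_nonneg_right (h1'.trans h2') hdα.le
  -- the case of an empty A
  rcases A.eq_empty_or_nonempty with rfl | hA
  · refine ⟨fun _ => 0, ⟨0, by simp⟩, by simp, ?_⟩
    apply max_le
    · apply Real.sSup_le _ hCN0
      rintro r ⟨x, y, hxy, rfl⟩
      simp only [sub_zero, sub_self, abs_zero, zero_div]
      exact hCN0
    · apply Real.sSup_le _ hCN0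
      rintro r ⟨x, rfl⟩
      simpa using hCN0
  obtain ⟨a₀, ha₀⟩ := hA
  haveI : Nonempty K := ⟨a₀⟩
  -- boundedness of f
  obtain ⟨D, hD⟩ : ∃ D : ℝ, ∀ x y : K, dist x y ≤ D := by
    have hb := (isCompact_univ (X := K)).isBounded
    rw [Metric.isBounded_iff] at hb
    obtain ⟨D, hD⟩ := hb
    exact ⟨D, fun x y => hD (Set.mem_univ x) (Set.mem_univ y)⟩
  have hbdd : BddAbove (Set.range fun x : K => |f x|) := by
    refine ⟨|f a₀| + N * (max D 1) ^ α, ?_⟩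
    rintro r ⟨x, rfl⟩
    have h₁ : |f x| ≤ |f a₀| + |f x - f a₀| := by
      have := abs_sub_abs_le_abs_sub (f x) (f a₀); linarith [abs_nonneg (f x - f a₀)]
    have h₂ : |f x - f a₀| ≤ N * (max D 1) ^ α := by
      refine (hfN x a₀).trans ?_
      have : dist x a₀ ^ α ≤ (max D 1) ^ α :=
        Real.rpow_le_rpow dist_nonneg ((hD x a₀).trans (le_max_left _ _)) h0.le
      exact mul_le_mul_of_nonneg_left this hN0
    linarith
  have hfS : ∀ x : K, |f x| ≤ S := fun x => le_csSup hbdd ⟨x, rfl⟩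
  -- the separation constant
  obtain ⟨δ, hδpos, hδle⟩ :
      ∃ δ : ℝ, 0 < δ ∧ ∀ a ∈ A, ∀ b ∈ A, a ≠ b → δ ≤ dist a b := by
    set P : Finset ℝ := A.offDiag.image fun p => dist p.1 p.2 with hPdef
    rcases P.eq_empty_or_nonempty with hP | hP
    · refine ⟨1, one_pos, fun a ha b hb hab => absurd ?_ (by simp [hP] : ¬(dist a b ∈ P))⟩
      exact Finset.mem_image.2 ⟨(a, b), Finset.mem_offDiag.2 ⟨ha, hb, hab⟩, rfl⟩
    · refine ⟨P.min' hP, ?_, fun a ha b hb hab => ?_⟩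
      · obtain ⟨p, hp, hpe⟩ := Finset.mem_image.1 (P.min'_mem hP)
        rw [← hpe]
        exact dist_pos.2 (Finset.mem_offDiag.1 hp).2.2
      · exact Finset.min'_le _ _
          (Finset.mem_image.2 ⟨(a, b), Finset.mem_offDiag.2 ⟨ha, hb, hab⟩, rfl⟩)
  -- the modulus ψ
  have hC0 : (0:ℝ) < C := by linarith
  have hC1α : 1 < C ^ (1/α) :=
    (Real.one_lt_rpow_iff_of_pos hC0).2 (Or.inl ⟨hC, by positivity⟩)
  set ε : ℝ := (C ^ (1/α) - 1) * δ with hεdef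
  have hεpos : 0 < ε := mul_pos (by linarith) hδpos
  set Λ : ℝ := δ ^ (α - 1) with hΛdef
  have hΛpos : 0 < Λ := Real.rpow_pos_of_pos hδpos _
  set ψ : ℝ → ℝ := fun t => min (Λ * t) ((t + ε) ^ α) with hψdef
  have hψ0 : ψ 0 = 0 := by
    simp only [hψdef, mul_zero, zero_add]
    exact min_eq_left (Real.rpow_nonneg hεpos.le α)
  have hψnn : ∀ t : ℝ, 0 ≤ t → 0 ≤ ψ t := fun t ht =>
    le_min (by positivity) (Real.rpow_nonneg (by linarith) α)
  have hψmono : ∀ s t : ℝ, 0 ≤ s → s ≤ t → ψ s ≤ ψ t := by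
    intro s t hs hst
    exact min_le_min (by nlinarith) (Real.rpow_le_rpow (by linarith) (by linarith) h0.le)
  have hψconc : ConcaveOn ℝ (Set.Ici 0) ψ := by
    have hlin : ConcaveOn ℝ (Set.Ici (0:ℝ)) fun t : ℝ => Λ * t := by
      have := (concaveOn_id (convex_Ici (0:ℝ))).smul hΛpos.le
      simpa [smul_eq_mul] using this
    have := hlin.inf (aux_concave_shift h0.le h1.le hεpos.le)
    exact this
  have hψsub : ∀ u v : ℝ, 0 ≤ u → 0 ≤ v → ψ (u + v) ≤ ψ u + ψ v := fun u v hu hv =>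
    aux_subadd hψconc hψ0 hu hv
  have hψlin : ∀ t : ℝ, ψ t ≤ Λ * t := fun t => min_le_left _ _
  -- comparison with C * d^α
  have hψC : ∀ d : ℝ, 0 < d → ψ d ≤ C * d ^ α := by
    intro d hd
    have h1α : (0:ℝ) < 1 - α := by linarith
    by_cases hcase : d ≤ C ^ (1/(1-α)) * δ
    · refine (min_le_left _ _).trans ?_
      have hdsplit : d ^ (1-α) * d ^ α = d := by
        rw [← Real.rpow_add hd]; norm_num
      have hkey : d ^ (1-α) ≤ C * δ ^ (1-α) := by
        calc d ^ (1-α) ≤ (C ^ (1/(1-α)) * δ) ^ (1-α) :=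
              Real.rpow_le_rpow hd.le hcase h1α.le
          _ = (C ^ (1/(1-α))) ^ (1-α) * δ ^ (1-α) :=
              Real.mul_rpow (by positivity) hδpos.le
          _ = C * δ ^ (1-α) := by
              rw [← Real.rpow_mul hC0.le, one_div, inv_mul_cancel₀ (ne_of_gt h1α),
                Real.rpow_one]
      have hδδ : Λ * δ ^ (1-α) = 1 := by
        rw [hΛdef, ← Real.rpow_add hδpos]
        norm_num
      calc Λ * d = Λ * (d ^ (1-α) * d ^ α) := by rw [hdsplit]
        _ ≤ Λ * ((C * δ ^ (1-α)) * d ^ α) := by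
            apply mul_le_mul_of_nonneg_left _ hΛpos.le
            exact mul_le_mul_of_nonneg_right hkey (Real.rpow_nonneg hd.le α)
        _ = C * (Λ * δ ^ (1-α)) * d ^ α := by ring
        _ = C * d ^ α := by rw [hδδ, mul_one]
    · push_neg at hcase
      have hC1' : (1:ℝ) ≤ C ^ (1/(1-α)) := by
        have h1α : (0:ℝ) < 1 - α := by linarith
        exact le_of_lt ((Real.one_lt_rpow_iff_of_pos hC0 (y := 1/(1-α))).2
          (Or.inl ⟨hC, by positivity⟩))
      have hδd : δ ≤ d := by nlinarith
      refine (min_le_right _ _).trans ?_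
      have hbase : d + ε ≤ C ^ (1/α) * d := by
        have : ε ≤ (C ^ (1/α) - 1) * d := by
          rw [hεdef]; nlinarith
        linarith
      calc (d + ε) ^ α ≤ (C ^ (1/α) * d) ^ α :=
            Real.rpow_le_rpow (by linarith) hbase h0.le
        _ = (C ^ (1/α)) ^ α * d ^ α := Real.mul_rpow (by positivity) hd.le
        _ = C * d ^ α := by
            rw [← Real.rpow_mul hC0.le, one_div, inv_mul_cancel₀ (ne_of_gt h0),
              Real.rpow_one]
  -- ψ dominates t^α for t ≥ δ
  have hψge : ∀ t : ℝ, δ ≤ t → t ^ α ≤ ψ t := by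
    intro t ht
    have htpos : 0 < t := lt_of_lt_of_le hδpos ht
    refine le_min ?_ (Real.rpow_le_rpow htpos.le (by linarith) h0.le)
    have h₁ : t ^ (α - 1) ≤ δ ^ (α - 1) :=
      Real.rpow_le_rpow_of_nonpos hδpos ht (by linarith)
    calc t ^ α = t ^ (α - 1) * t := by
          rw [← Real.rpow_add_one (ne_of_gt htpos)]; norm_num
      _ ≤ Λ * t := mul_le_mul_of_nonneg_right h₁ (by positivity)
  -- the interpolating function
  set g₀ : K → ℝ := fun x => A.inf' ⟨a₀, ha₀⟩ fun a => f a + N * ψ (dist x a) with hg₀def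
  set g : K → ℝ := fun x => max (-S) (min (g₀ x) S) with hgdef
  -- key oscillation bound
  have hg₀ : ∀ x y : K, g₀ x - g₀ y ≤ N * ψ (dist x y) := by
    intro x y
    obtain ⟨b, hb, hby⟩ := Finset.exists_mem_eq_inf' ⟨a₀, ha₀⟩ fun a => f a + N * ψ (dist y a)
    have hx : g₀ x ≤ f b + N * ψ (dist x b) := Finset.inf'_le _ hb
    have hψb : ψ (dist x b) ≤ ψ (dist y b) + ψ (dist x y) := by
      have htri : dist x b ≤ dist y b + dist x y := by
        have := dist_triangle x y b
        rw [dist_comm x y] at this ⊢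
        linarith
      calc ψ (dist x b) ≤ ψ (dist y b + dist x y) := hψmono _ _ dist_nonneg htri
        _ ≤ ψ (dist y b) + ψ (dist x y) := hψsub _ _ dist_nonneg dist_nonneg
    have : g₀ y = f b + N * ψ (dist y b) := hby
    nlinarith [mul_le_mul_of_nonneg_left hψb hN0]
  have hgabs : ∀ x y : K, |g x - g y| ≤ N * ψ (dist x y) := by
    intro x y
    have h₀ : |g₀ x - g₀ y| ≤ N * ψ (dist x y) := by
      rw [abs_sub_le_iff]
      refine ⟨hg₀ x y, ?_⟩
      have := hg₀ y x
      rwa [dist_comm y x] at this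
    have hmax : |g x - g y| ≤ |min (g₀ x) S - min (g₀ y) S| := by
      rw [hgdef]
      simp only [max_comm (-S)]
      exact abs_max_sub_max_le_abs _ _ _
    have hmin : |min (g₀ x) S - min (g₀ y) S| ≤ |g₀ x - g₀ y| := by
      refine (abs_min_sub_min_le_max _ _ _ _).trans ?_
      simp
    exact (hmax.trans hmin).trans h₀
  -- g agrees with f on A
  have hgA : ∀ a ∈ A, g a = f a := by
    intro a ha
    have hg₀a : g₀ a = f a := by
      apply le_antisymm
      · have h := Finset.inf'_le (b := a) (fun b => f b + N * ψ (dist a b)) ha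
        simp only [dist_self, hψ0, mul_zero, add_zero] at h
        exact h
      · apply Finset.le_inf'
        intro b hb
        by_cases hab : a = b
        · subst hab
          simp [dist_self, hψ0]
        · have h₁ : f a - f b ≤ |f a - f b| := le_abs_self _
          have h₂ : |f a - f b| ≤ N * dist a b ^ α := hfN a b
          have h₃ : dist a b ^ α ≤ ψ (dist a b) := hψge _ (hδle a ha b hb hab)
          nlinarith [mul_le_mul_of_nonneg_left h₃ hN0]
    have hfa : |f a| ≤ S := hfS a
    rw [hgdef]
    simp only [hg₀a]
    rw [min_eq_left (le_trans (le_abs_self _) hfa),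
      max_eq_right (by linarith [neg_abs_le (f a)] : -S ≤ f a)]
  -- g is bounded by S
  have hgS : ∀ x : K, |g x| ≤ S := by
    intro x
    rw [abs_le]
    constructor
    · exact le_max_left _ _
    · exact max_le (by linarith) (min_le_right _ _)
  refine ⟨g, ⟨N * Λ, fun x y => ?_⟩, hgA, ?_⟩
  · calc |g x - g y| ≤ N * ψ (dist x y) := hgabs x y
      _ ≤ N * (Λ * dist x y) := mul_le_mul_of_nonneg_left (hψlin _) hN0
      _ = N * Λ * dist x y := by ring
  · apply max_le
    · apply Real.sSup_le _ hCN0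
      rintro r ⟨x, y, hxy, rfl⟩
      have hd : (0:ℝ) < dist x y := dist_pos.2 hxy
      have hdα : (0:ℝ) < dist x y ^ α := Real.rpow_pos_of_pos hd α
      rw [div_le_iff₀ hdα]
      calc |g x - g y| ≤ N * ψ (dist x y) := hgabs x y
        _ ≤ N * (C * dist x y ^ α) := mul_le_mul_of_nonneg_left (hψC _ hd) hN0
        _ = C * N * dist x y ^ α := by ring
    · apply Real.sSup_le _ hCN0
      rintro r ⟨x, rfl⟩
      exact (hgS x).trans (hSN.trans hNC)
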